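/- arXiv:1306.0299 — 4 statements merged into one kernel-verified Lean document; each statement's English description precedes it below -/
import Mathlib

section
/- Let p be a prime and R a commutative ring in which p·1 = 0, let D : R → R be a derivation, and let a ∈ R. Writing L_b : R → R for the multiplication map x ↦ b·x, one has the identity of additive endomorphisms of R: (D + L_a)^p = D^p + L_{a^p + D^{p-1}(a)}, where the powers of maps denote iterated composition. (This is the Jacobson–Hochschild identity used in the paper to compute p-curvatures of rank-one connections.) -/
open Polynomial Finset

-- congruence: (-1)^(p-1-m) * C(p-1,m) ≡ 1 mod p
lemma choose_key (p : ℕ) (hp : p.Prime) (m : ℕ) (hm : m ≤ p - 1) :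
    ∃ d : ℤ, (-1 : ℤ) ^ (p - 1 - m) * ((p - 1).choose m : ℤ) = 1 + p * d := by
  have h1 : ∀ k, k ≤ p - 1 → (((p - 1).choose k : ZMod p)) = (-1) ^ k := by
    intro k
    induction k with
    | zero => simp
    | succ k ih =>
      intro hk
      have hk' : k ≤ p - 1 := le_of_lt (Nat.lt_of_lt_of_le (Nat.lt_succ_self k) hk)
      have hpascal : (p - 1).choose k + (p - 1).choose (k + 1) = p.choose (k + 1) := by
        have := Nat.succ_sub_one p
        rw [← Nat.choose_succ_succ, Nat.succ_eq_add_one, Nat.sub_add_cancel hp.one_lt.le]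
      have hdvd : (p : ℤ) ∣ (p.choose (k + 1) : ℤ) := by
        exact_mod_cast Int.natCast_dvd_natCast.mpr
          (Nat.Prime.dvd_choose_self hp (Nat.succ_ne_zero k)
            (lt_of_le_of_lt hk (Nat.sub_lt hp.pos one_pos)))
      have h0 : ((p.choose (k + 1) : ZMod p)) = 0 :=
        (ZMod.natCast_eq_zero_iff (p.choose (k+1)) p).mpr
          (Nat.Prime.dvd_choose_self hp (Nat.succ_ne_zero k)
            (lt_of_le_of_lt hk (Nat.sub_lt hp.pos one_pos)))
      have : ((p - 1).choose k : ZMod p) + ((p - 1).choose (k + 1) : ZMod p) = 0 := by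
        rw [← Nat.cast_add, hpascal, h0]
      rw [ih hk'] at this
      have := eq_neg_of_add_eq_zero_right this
      rw [this]; ring
  have h2 : ((-1 : ZMod p)) ^ (p - 1) = 1 := by
    rcases hp.eq_two_or_odd' with h2 | hodd
    · subst h2; decide
    · have : Even (p - 1) := Nat.Odd.sub_odd hodd odd_one
      exact this.neg_one_pow
  have key : (((-1 : ℤ) ^ (p - 1 - m) * ((p - 1).choose m : ℤ) : ℤ) : ZMod p) = 1 := by
    push_cast
    rw [h1 m hm, ← pow_add, Nat.sub_add_cancel hm, h2]
  have : ((((-1 : ℤ) ^ (p - 1 - m) * ((p - 1).choose m : ℤ) - 1 : ℤ)) : ZMod p) = 0 := by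
    push_cast
    rw [h1 m hm, ← pow_add, Nat.sub_add_cancel hm, h2]; ring
  have hdvd : (p : ℤ) ∣ ((-1 : ℤ) ^ (p - 1 - m) * ((p - 1).choose m : ℤ) - 1) := by
    exact_mod_cast (ZMod.intCast_zmod_eq_zero_iff_dvd _ p).mp this
  obtain ⟨d, hd⟩ := hdvd
  exact ⟨d, by linarith⟩

theorem jacobson_core {A : Type*} [Ring A] (p : ℕ) (hp : p.Prime)
    (hA : ∀ x : A, p • x = 0) (u v : A) (w : ℕ → A) (hw0 : w 0 = u)
    (hcomm : ∀ i, u * w i = w i * u)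
    (hder : ∀ i, v * w i - w i * v = w (i + 1)) :
    (v + u) ^ p = v ^ p + u ^ p + w (p - 1) := by
  classical
  set z : A[X] := C u * X + C v with hz
  have hB : ∀ x : A[X], p • x = 0 := by
    have hpA : (p : A) = 0 := by have := hA 1; simpa using this
    intro x; ext n; simp [Polynomial.coeff_smul, hpA]
  -- derivative of z
  have hdz : derivative z = C u := by
    simp [hz]
  -- derivative of z^n
  have hder_pow : ∀ n : ℕ, derivative (z ^ n) =
      ∑ i ∈ range n, z ^ i * C u * z ^ (n - 1 - i) := by
    intro n
    induction n with
    | zero => simp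
    | succ n ih =>
      rw [pow_succ', derivative_mul, hdz, ih, Finset.mul_sum, Finset.sum_range_succ']
      simp only [pow_zero, one_mul, Nat.sub_zero, Nat.add_sub_cancel]
      rw [add_comm]
      congr 1
      apply Finset.sum_congr rfl
      intro i hi
      rw [← mul_assoc, ← mul_assoc, ← pow_succ']
      congr 2
      omega
  -- the commutator step
  have step : ∀ k, z * C (w k) - C (w k) * z = C (w (k + 1)) := by
    intro k
    have h1 : z * C (w k) = C (u * w k) * X + C (v * w k) := by
      rw [hz, add_mul, mul_assoc, Polynomial.X_mul, ← mul_assoc, ← C_mul, ← C_mul]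
    have h2 : C (w k) * z = C (w k * u) * X + C (w k * v) := by
      rw [hz, mul_add, ← mul_assoc, ← C_mul, ← C_mul]
    have hcancel : ∀ x y y' : A[X], (x + y) - (x + y') = y - y' := by intros; abel
    rw [h1, h2, hcomm k, hcancel, ← C_sub, hder k]
  -- the conjugation sum
  have hconj : ∑ i ∈ range p, z ^ i * C u * z ^ (p - 1 - i) = C (w (p - 1)) := by
    set L : AddMonoid.End A[X] := AddMonoidHom.mulLeft z with hL
    set Rr : AddMonoid.End A[X] := AddMonoidHom.mulRight z with hRr
    have hLb : ∀ b, L b = z * b := fun _ => rfl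
    have hRb : ∀ b, Rr b = b * z := fun _ => rfl
    have hcom0 : Commute L Rr := AddMonoidHom.ext fun b => show z * (b * z) = z * b * z from (mul_assoc z b z).symm
    have hcom : Commute L (-Rr) := hcom0.neg_right
    have hLpow : ∀ (n : ℕ) (b : A[X]), (L ^ n) b = z ^ n * b := by
      intro n
      induction n with
      | zero => intro b; simp [AddMonoid.End.one_apply]
      | succ n ih =>
        intro b
        have : (L ^ (n + 1)) b = (L ^ n) (L b) := by rw [pow_succ]; rfl
        rw [this, hLb, ih, ← mul_assoc, ← pow_succ]
    have hRpow : ∀ (n : ℕ) (b : A[X]), ((-Rr) ^ n) b = (-1 : ℤ) ^ n • (b * z ^ n) := by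
      intro n
      induction n with
      | zero => intro b; simp [AddMonoid.End.one_apply]
      | succ n ih =>
        intro b
        have h0 : ((-Rr) ^ (n + 1)) b = ((-Rr) ^ n) ((-Rr) b) := by rw [pow_succ]; rfl
        rw [h0, (show (-Rr) b = -(Rr b) from rfl), hRb, map_neg, ih, ← neg_smul]
        rw [mul_assoc, ← pow_succ']
        congr 1
        ring
    have hadC : ∀ k, ((L - Rr) ^ k) (C (w 0)) = C (w k) := by
      intro k
      induction k with
      | zero => simp [AddMonoid.End.one_apply]
      | succ k ih =>
        have h0 : ((L - Rr) ^ (k + 1)) (C (w 0)) = (L - Rr) (((L - Rr) ^ k) (C (w 0))) := by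
          rw [pow_succ']; rfl
        rw [h0, ih, (show (L - Rr) (C (w k)) = L (C (w k)) - Rr (C (w k)) from rfl), hLb, hRb, step k]
    have hp1 : p - 1 + 1 = p := Nat.succ_pred_eq_of_pos hp.pos
    have hbin := hcom.add_pow (p - 1)
    have hLR : L + -Rr = L - Rr := by rw [sub_eq_add_neg]
    rw [hLR, hp1] at hbin
    have happ : C (w (p - 1)) =
        (∑ m ∈ range p, L ^ m * (-Rr) ^ (p - 1 - m) *
          (((p - 1).choose m : ℕ) : AddMonoid.End A[X])) (C u) := by
      calc C (w (p - 1)) = ((L - Rr) ^ (p - 1)) (C (w 0)) := (hadC _).symm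
        _ = _ := by rw [hw0, hbin]
    rw [happ, show ∀ (s : Finset ℕ) (f : ℕ → AddMonoid.End A[X]) (b : A[X]),
        (∑ m ∈ s, f m) b = ∑ m ∈ s, f m b from fun s f b => AddMonoidHom.finset_sum_apply _ _ _]
    apply Finset.sum_congr rfl
    intro m hm
    have hm' : m ≤ p - 1 := by
      have := Finset.mem_range.mp hm; omega
    have hterm : (L ^ m * (-Rr) ^ (p - 1 - m) * (((p - 1).choose m : ℕ) : AddMonoid.End A[X]))
        (C u) = (((-1 : ℤ) ^ (p - 1 - m) * ((p - 1).choose m : ℤ))) • (z ^ m * C u * z ^ (p - 1 - m)) := by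
      have e1 : (L ^ m * (-Rr) ^ (p - 1 - m) * (((p - 1).choose m : ℕ) : AddMonoid.End A[X]))
          (C u) = (L ^ m) (((-Rr) ^ (p - 1 - m)) ((((p - 1).choose m : ℕ) : AddMonoid.End A[X]) (C u))) := rfl
      rw [e1, AddMonoid.End.natCast_apply, map_nsmul, hRpow, hLpow]
      rw [mul_smul_comm, ← Nat.cast_smul_eq_nsmul ℤ, mul_smul_comm, smul_smul, mul_comm (((p - 1).choose m : ℤ)), ← mul_assoc]
    rw [hterm]
    obtain ⟨d, hd⟩ := choose_key p hp m hm'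
    rw [hd, add_smul, one_smul, mul_smul, Nat.cast_smul_eq_nsmul, hB, add_zero]
  -- the derivative of z^p is C (w (p-1))
  have hkey : derivative (z ^ p) = C (w (p - 1)) := by
    rw [hder_pow p, hconj]
  have hp2 : 2 ≤ p := hp.two_le
  -- degree bounds
  have hdegz : z.natDegree ≤ 1 := by
    refine le_trans (natDegree_add_le _ _) ?_
    have h1 : (C u * X : A[X]).natDegree ≤ 1 := by
      refine le_trans (natDegree_mul_le) ?_
      simp [natDegree_C, natDegree_X_le]
    simp [h1, natDegree_C]
  have hdegq : (z ^ p).natDegree ≤ p := by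
    refine le_trans (natDegree_pow_le) ?_
    calc p * z.natDegree ≤ p * 1 := Nat.mul_le_mul_left p hdegz
      _ = p := Nat.mul_one p
  -- coefficient 1
  have hcoeff1 : (z ^ p).coeff 1 = w (p - 1) := by
    have hcd := coeff_derivative (z ^ p) 0
    rw [hkey] at hcd
    simpa using hcd.symm
  -- middle coefficients vanish
  have hmid : ∀ k, 2 ≤ k → k < p → (z ^ p).coeff k = 0 := by
    intro k h2 hkp
    have hcd := coeff_derivative (z ^ p) (k - 1)
    rw [hkey] at hcd
    have hk1 : k - 1 + 1 = k := by omega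
    have hne : (k - 1 : ℕ) ≠ 0 := by omega
    rw [coeff_C, if_neg hne] at hcd
    have hcast : ((k - 1 : ℕ) : A) + 1 = (k : A) := by
      have : ((k - 1 : ℕ) : A) + 1 = ((k - 1 + 1 : ℕ) : A) := by push_cast; ring
      rw [this, hk1]
    rw [hk1, hcast] at hcd
    have hsm : k • (z ^ p).coeff k = 0 := by
      rw [nsmul_eq_mul']
      exact hcd.symm
    have hndvd : ¬ p ∣ k := by
      intro hdvd
      have := Nat.le_of_dvd (by omega) hdvd; omega
    have hcop : Nat.Coprime p k := (Nat.Prime.coprime_iff_not_dvd hp).mpr hndvd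
    have hgcd : (1 : ℤ) = p * Nat.gcdA p k + k * Nat.gcdB p k := by
      have hg := Nat.gcd_eq_gcd_ab p k
      rw [hcop] at hg
      exact_mod_cast hg
    calc (z ^ p).coeff k = (1 : ℤ) • (z ^ p).coeff k := (one_smul _ _).symm
      _ = ((p : ℤ) * Nat.gcdA p k + (k : ℤ) * Nat.gcdB p k) • (z ^ p).coeff k := by
          rw [← hgcd]
      _ = 0 := by
          rw [add_smul, mul_comm (p : ℤ), mul_comm (k : ℤ), mul_smul, mul_smul,
            Nat.cast_smul_eq_nsmul, Nat.cast_smul_eq_nsmul, hA, hsm, smul_zero, smul_zero,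
            add_zero]
  -- high coefficients vanish
  have hhigh : ∀ k, p < k → (z ^ p).coeff k = 0 := fun k hk =>
    coeff_eq_zero_of_natDegree_lt (lt_of_le_of_lt hdegq hk)
  -- constant coefficient
  have hz0 : z.coeff 0 = v := by
    simp [hz]
  have hc0 : ∀ n : ℕ, (z ^ n).coeff 0 = v ^ n := by
    intro n
    induction n with
    | zero => simp
    | succ n ih => rw [pow_succ', mul_coeff_zero, hz0, ih, ← pow_succ']
  -- top coefficient
  have hcp : ∀ n : ℕ, (z ^ n).coeff n = u ^ n := by
    intro n
    induction n with
    | zero => simp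
    | succ n ih =>
      have hsplit : z * z ^ n = C u * (X * z ^ n) + C v * z ^ n := by
        rw [hz, add_mul, mul_assoc]
      have hvan : (z ^ n).coeff (n + 1) = 0 := by
        apply coeff_eq_zero_of_natDegree_lt
        refine lt_of_le_of_lt ?_ (Nat.lt_succ_self n)
        refine le_trans (natDegree_pow_le) ?_
        calc n * z.natDegree ≤ n * 1 := Nat.mul_le_mul_left n hdegz
          _ = n := Nat.mul_one n
      rw [pow_succ', hsplit, coeff_add, coeff_C_mul, coeff_C_mul, coeff_X_mul, ih, hvan,
        mul_zero, add_zero, ← pow_succ']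
  -- evaluation at 1
  have hcomm1 : ∀ b : A, Commute ((RingHom.id A) b) (1 : A) := fun b => Commute.one_right _
  set φ : A[X] →+* A := eval₂RingHom' (RingHom.id A) 1 hcomm1 with hphi
  have hphiC : ∀ b : A, φ (C b) = b := fun b => eval₂_C _ _
  have hphiX : φ X = 1 := eval₂_X _ _
  have hphiz : φ z = u + v := by
    rw [hz, map_add, map_mul, hphiC, hphiC, hphiX, mul_one]
  have hq1 : φ (z ^ p) = (u + v) ^ p := by rw [map_pow, hphiz]
  have hq2 : φ (z ^ p) = ∑ i ∈ range (p + 1), (z ^ p).coeff i := by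
    show eval₂ (RingHom.id A) 1 (z ^ p) = _
    have : eval₂ (RingHom.id A) 1 (z ^ p) = (z ^ p).eval 1 := rfl
    rw [this, eval_eq_sum_range' (lt_of_le_of_lt hdegq (Nat.lt_succ_self p))]
    simp
  have hsum : ∑ i ∈ range (p + 1), (z ^ p).coeff i = v ^ p + w (p - 1) + u ^ p := by
    have hform : ∀ i ∈ range (p + 1), (z ^ p).coeff i =
        (if i = 0 then v ^ p else 0) + (if i = 1 then w (p - 1) else 0) +
          (if i = p then u ^ p else 0) := by
      intro i hi
      have hip : i ≤ p := by have := Finset.mem_range.mp hi; omega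
      by_cases h0 : i = 0
      · subst h0
        have hn1 : (0 : ℕ) ≠ 1 := by omega
        have hnp : (0 : ℕ) ≠ p := by omega
        rw [hc0 p, if_pos rfl, if_neg hn1, if_neg hnp, add_zero, add_zero]
      · by_cases h1 : i = 1
        · subst h1
          have hnp : (1 : ℕ) ≠ p := by omega
          rw [hcoeff1, if_neg h0, if_pos rfl, if_neg hnp, zero_add, add_zero]
        · by_cases hpi : i = p
          · rw [hpi, hcp p, if_neg (show ¬ (p = 0) by omega), if_neg (show ¬ (p = 1) by omega),
              if_pos rfl, zero_add, zero_add]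
          · have : (z ^ p).coeff i = 0 := hmid i (by omega) (by omega)
            rw [this, if_neg h0, if_neg h1, if_neg hpi, add_zero, add_zero]
    rw [Finset.sum_congr rfl hform, Finset.sum_add_distrib, Finset.sum_add_distrib,
      Finset.sum_ite_eq' (range (p + 1)) 0, Finset.sum_ite_eq' (range (p + 1)) 1,
      Finset.sum_ite_eq' (range (p + 1)) p]
    have m0 : (0 : ℕ) ∈ range (p + 1) := Finset.mem_range.mpr (by omega)
    have m1 : (1 : ℕ) ∈ range (p + 1) := Finset.mem_range.mpr (by omega)
    have mp' : p ∈ range (p + 1) := Finset.mem_range.mpr (by omega)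
    rw [if_pos m0, if_pos m1, if_pos mp']
  have hfinal := hq1.symm.trans hq2
  rw [hsum] at hfinal
  calc (v + u) ^ p = (u + v) ^ p := by rw [add_comm]
    _ = v ^ p + w (p - 1) + u ^ p := hfinal
    _ = v ^ p + u ^ p + w (p - 1) := by abel

/-- **Jacobson–Hochschild identity.** Let `p` be a prime and `R` a commutative ring with
`p • 1 = 0`. For a derivation `D : R → R` (a ℤ-linear map satisfying the Leibniz rule) and
`a ∈ R`, the additive endomorphism `(D + L_a)^p` equals `D^p + L_{a^p + D^{p-1}(a)}`, where
`L_b` denotes multiplication by `b` and powers are iterated composition. -/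
theorem jacobson_identity (p : ℕ) (hp : p.Prime) (R : Type*) [CommRing R]
    (hchar : (p : R) = 0)
    (D : R → R) (hadd : ∀ x y : R, D (x + y) = D x + D y)
    (hleibniz : ∀ x y : R, D (x * y) = x * D y + D x * y) (a : R) :
    ∀ x : R, (fun y => D y + a * y)^[p] x = D^[p] x + (a ^ p + D^[p - 1] a) * x := by
  intro x
  set dd : Module.End ℤ R := (AddMonoidHom.mk' D hadd).toIntLinearMap with hdd
  set ml : R → Module.End ℤ R := fun b => (AddMonoidHom.mulLeft b).toIntLinearMap with hml
  have hddb : ∀ y, dd y = D y := fun _ => rfl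
  have hmlb : ∀ b y, ml b y = b * y := fun _ _ => rfl
  have hA : ∀ f : Module.End ℤ R, p • f = 0 := by
    intro f
    ext y
    show p • f y = 0
    rw [nsmul_eq_mul, hchar, zero_mul]
  have hmul : ∀ b c, ml b * ml c = ml (b * c) := by
    intro b c
    ext y
    show b * (c * y) = (b * c) * y
    rw [mul_assoc]
  have hcomm : ∀ i, ml a * ml (D^[i] a) = ml (D^[i] a) * ml a := by
    intro i
    rw [hmul, hmul, mul_comm]
  have hder : ∀ i, dd * ml (D^[i] a) - ml (D^[i] a) * dd = ml (D^[i + 1] a) := by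
    intro i
    ext y
    show D (D^[i] a * y) - D^[i] a * D y = D^[i + 1] a * y
    rw [hleibniz, Function.iterate_succ_apply']
    ring
  have hcore := jacobson_core p hp hA (ml a) dd (fun i => ml (D^[i] a)) rfl hcomm hder
  have hmlpow : ∀ n, (ml a) ^ n = ml (a ^ n) := by
    intro n
    induction n with
    | zero =>
      rw [pow_zero, pow_zero]
      ext y
      show y = 1 * y
      rw [one_mul]
    | succ n ih => rw [pow_succ, ih, hmul, ← pow_succ]
  have hiter : (fun y => D y + a * y) = ⇑(dd + ml a) := by
    funext y
    show D y + a * y = dd y + ml a y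
    rfl
  rw [hiter]
  have h1 : (⇑(dd + ml a))^[p] x = ((dd + ml a) ^ p) x := (Module.End.pow_apply _ _ _).symm
  rw [h1, hcore, hmlpow]
  have h2 : (dd ^ p) x = D^[p] x := by
    rw [Module.End.pow_apply]
    rfl
  rw [LinearMap.add_apply, LinearMap.add_apply, h2, hmlb, hmlb, add_mul, add_assoc]
end

section
/- Let k be a field of characteristic p > 0, n ≥ 1, and A an n×n matrix over k[[z]]. Define the operator E_A on n×n matrices over k[[z]] by E_A(B) = B′ + A·B, and set Ψ = E_A^{p−1}(A), the (p−1)-fold iterate of E_A applied to A. Then D_A^p(v) = Ψ·v for every v ∈ k[[z]]^n. (This is the paper's formula that the p-curvature of the connection d/dz + A is represented by the matrix (d/dz + A)^{p−1}(A).) -/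
open PowerSeries

/-- The formal derivative `d/dz` on `k⟦z⟧`. -/
noncomputable def pd (k : Type*) [CommRing k] (f : PowerSeries k) : PowerSeries k :=
  PowerSeries.derivative k f

/-- Entrywise formal derivative of a matrix over `k⟦z⟧`. -/
noncomputable def matD (k : Type*) [CommRing k] {n : ℕ}
    (B : Matrix (Fin n) (Fin n) (PowerSeries k)) : Matrix (Fin n) (Fin n) (PowerSeries k) :=
  fun i j => pd k (B i j)

/-- The connection operator `D_A = d/dz + A` acting on `k⟦z⟧ⁿ`: `D_A(v) = v′ + A·v`. -/
noncomputable def connOp (k : Type*) [CommRing k] {n : ℕ}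
    (A : Matrix (Fin n) (Fin n) (PowerSeries k)) :
    (Fin n → PowerSeries k) → (Fin n → PowerSeries k) :=
  fun v => (fun i => pd k (v i)) + A.mulVec v

/-- The operator `E_A(B) = B′ + A·B` acting on `n×n` matrices over `k⟦z⟧`. -/
noncomputable def matConnOp (k : Type*) [CommRing k] {n : ℕ}
    (A : Matrix (Fin n) (Fin n) (PowerSeries k)) :
    Matrix (Fin n) (Fin n) (PowerSeries k) → Matrix (Fin n) (Fin n) (PowerSeries k) :=
  fun B => matD k B + A * B

section Aux
variable {k : Type*} [CommRing k] {n : ℕ}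

lemma pd_mul (f g : PowerSeries k) : pd k (f * g) = pd k f * g + f * pd k g := by
  unfold pd
  rw [Derivation.leibniz]
  simp [smul_eq_mul]
  ring

lemma connOp_add (A : Matrix (Fin n) (Fin n) (PowerSeries k)) (x y : Fin n → PowerSeries k) :
    connOp k A (x + y) = connOp k A x + connOp k A y := by
  funext i
  simp only [connOp, Pi.add_apply, Matrix.mulVec_add, pd, map_add]
  ring

lemma connOp_mulVec (A B : Matrix (Fin n) (Fin n) (PowerSeries k)) (w : Fin n → PowerSeries k) :
    connOp k A (B.mulVec w) =
      (matConnOp k A B).mulVec w + B.mulVec (fun i => pd k (w i)) := by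
  have h1 : (fun i => pd k (B.mulVec w i)) =
      (matD k B).mulVec w + B.mulVec (fun i => pd k (w i)) := by
    funext i
    simp only [Matrix.mulVec, dotProduct, Pi.add_apply, matD]
    rw [show pd k (∑ j, B i j * w j) = ∑ j, pd k (B i j * w j) from map_sum (derivative k).toLinearMap.toAddMonoidHom _ _,
      ← Finset.sum_add_distrib]
    exact Finset.sum_congr rfl fun j _ => pd_mul _ _
  show (fun i => pd k (B.mulVec w i)) + A.mulVec (B.mulVec w) = _
  rw [h1, Matrix.mulVec_mulVec, matConnOp, Matrix.add_mulVec]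
  abel

end Aux

section Aux2
variable {k : Type*} [CommRing k]

lemma pd_iterate_coeff (r : ℕ) (f : PowerSeries k) (m : ℕ) :
    coeff m ((pd k)^[r] f) = ((m + r).descFactorial r : k) * coeff (m + r) f := by
  induction r generalizing f with
  | zero => simp
  | succ r ih =>
    rw [Function.iterate_succ_apply, ih, show pd k f = derivative k f from rfl,
      coeff_derivative]
    rw [show m + (r + 1) = m + r + 1 by ring, Nat.succ_descFactorial_succ]
    push_cast
    ring

lemma pd_iterate_prime_eq_zero (p : ℕ) (hp : p.Prime) [CharP k p] (f : PowerSeries k) :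
    (pd k)^[p] f = 0 := by
  ext m
  rw [pd_iterate_coeff, map_zero]
  have hdvd : p ∣ (m + p).descFactorial p :=
    dvd_trans (Nat.dvd_factorial hp.pos le_rfl) (Nat.factorial_dvd_descFactorial _ _)
  rw [(CharP.cast_eq_zero_iff k p _).mpr hdvd, zero_mul]

end Aux2

section Key
variable {k : Type*} [CommRing k] {n : ℕ}

lemma key (A : Matrix (Fin n) (Fin n) (PowerSeries k)) (m : ℕ) (v : Fin n → PowerSeries k) :
    (connOp k A)^[m] v = ∑ j ∈ Finset.range (m + 1),
      m.choose j • ((matConnOp k A)^[j] 1).mulVec (fun i => (pd k)^[m - j] (v i)) := by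
  induction m with
  | zero =>
    rw [Finset.sum_range_one]
    simp only [Function.iterate_zero, Nat.choose_self, one_smul, id_eq, Nat.zero_sub]
    rw [Matrix.one_mulVec]
  | succ m ih =>
    rw [Function.iterate_succ_apply', ih]
    have hsum : ∀ (s : Finset ℕ) (f : ℕ → Fin n → PowerSeries k),
        connOp k A (∑ j ∈ s, f j) = ∑ j ∈ s, connOp k A (f j) := by
      intro s f
      induction s using Finset.induction with
      | empty =>
        funext i
        simp [connOp, pd, Matrix.mulVec_zero]
      | insert _ _ hx ihs =>
        rw [Finset.sum_insert hx, Finset.sum_insert hx, connOp_add, ihs]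
    have hnsmul : ∀ (c : ℕ) (x : Fin n → PowerSeries k),
        connOp k A (c • x) = c • connOp k A x := by
      intro c x
      induction c with
      | zero =>
        funext i
        simp [connOp, pd, Matrix.mulVec_zero]
      | succ c ihc => rw [succ_nsmul, succ_nsmul, connOp_add, ihc]
    rw [hsum]
    have hterm : ∀ j ∈ Finset.range (m + 1),
        m.choose j • connOp k A (((matConnOp k A)^[j] 1).mulVec (fun i => (pd k)^[m - j] (v i)))
          = m.choose j • (((matConnOp k A)^[j+1] 1).mulVec (fun i => (pd k)^[m - j] (v i))
            + ((matConnOp k A)^[j] 1).mulVec (fun i => (pd k)^[m + 1 - j] (v i))) := by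
      intro j hj
      rw [connOp_mulVec, ← Function.iterate_succ_apply' (matConnOp k A) j 1]
      have hpd : (fun i => pd k ((pd k)^[m - j] (v i))) = fun i => (pd k)^[m + 1 - j] (v i) := by
        funext i
        rw [← Function.iterate_succ_apply' (pd k) (m - j) (v i),
          Nat.succ_sub (Nat.lt_succ_iff.mp (Finset.mem_range.mp hj))]
      rw [hpd]
    rw [Finset.sum_congr rfl fun j hj => by rw [hnsmul, hterm j hj]]
    -- now both sides are sums; expand
    simp only [smul_add]
    rw [Finset.sum_add_distrib]
    rw [Finset.sum_range_succ' (fun j => (m+1).choose j •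
      ((matConnOp k A)^[j] 1).mulVec (fun i => (pd k)^[m + 1 - j] (v i))) (m+1)]
    have hL : ∀ j ∈ Finset.range (m + 1),
        (m+1).choose (j+1) • ((matConnOp k A)^[j+1] 1).mulVec (fun i => (pd k)^[m + 1 - (j+1)] (v i))
        = m.choose j • ((matConnOp k A)^[j+1] 1).mulVec (fun i => (pd k)^[m - j] (v i))
          + m.choose (j+1) • ((matConnOp k A)^[j+1] 1).mulVec (fun i => (pd k)^[m - j] (v i)) := by
      intro j hj
      rw [Nat.succ_sub_succ, Nat.choose_succ_succ, add_smul]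
    rw [Finset.sum_congr rfl hL, Finset.sum_add_distrib]
    have hR : ∑ j ∈ Finset.range (m + 1),
        m.choose j • ((matConnOp k A)^[j] 1).mulVec (fun i => (pd k)^[m + 1 - j] (v i))
        = ∑ j ∈ Finset.range m,
            m.choose (j+1) • ((matConnOp k A)^[j+1] 1).mulVec (fun i => (pd k)^[m - j] (v i))
          + m.choose 0 • ((matConnOp k A)^[0] 1).mulVec (fun i => (pd k)^[m + 1] (v i)) := by
      rw [Finset.sum_range_succ' (fun j => m.choose j •
        ((matConnOp k A)^[j] 1).mulVec (fun i => (pd k)^[m + 1 - j] (v i))) m]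
      congr 1
      exact Finset.sum_congr rfl fun j _ => by rw [Nat.succ_sub_succ]
    rw [hR]
    have hlast : ∑ j ∈ Finset.range (m + 1),
        m.choose (j+1) • ((matConnOp k A)^[j+1] 1).mulVec (fun i => (pd k)^[m - j] (v i))
        = ∑ j ∈ Finset.range m,
            m.choose (j+1) • ((matConnOp k A)^[j+1] 1).mulVec (fun i => (pd k)^[m - j] (v i)) := by
      rw [Finset.sum_range_succ, Nat.choose_succ_self, zero_smul, add_zero]
    rw [hlast]
    simp only [Nat.choose_zero_right, one_smul, Nat.sub_zero, Function.iterate_zero, id_eq]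
    abel

end Key

/-- The `p`-curvature of the connection `d/dz + A` is represented by the matrix
`Ψ = (d/dz + A)^{p-1}(A)`: one has `D_A^p(v) = Ψ·v` for all `v`. -/
theorem pCurvature_matrix_formula (k : Type*) [Field k] (p : ℕ) [Fact p.Prime] [CharP k p]
    (n : ℕ) (hn : 1 ≤ n) (A : Matrix (Fin n) (Fin n) (PowerSeries k)) :
    ∀ v : Fin n → PowerSeries k,
      (connOp k A)^[p] v = ((matConnOp k A)^[p - 1] A).mulVec v := by
  intro v
  have hp : p.Prime := Fact.out
  rw [key A p v, Finset.sum_range_succ]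
  have h0 : ∀ j ∈ Finset.range p,
      p.choose j • ((matConnOp k A)^[j] 1).mulVec (fun i => (pd k)^[p - j] (v i)) = 0 := by
    intro j hj
    rcases Nat.eq_zero_or_pos j with hj0 | hj0
    · subst hj0
      have : (fun i => (pd k)^[p - 0] (v i)) = (0 : Fin n → PowerSeries k) := by
        funext i
        rw [Nat.sub_zero, pd_iterate_prime_eq_zero p hp]
        rfl
      rw [this, Matrix.mulVec_zero, smul_zero]
    · obtain ⟨c, hc⟩ := hp.dvd_choose_self hj0.ne' (Finset.mem_range.mp hj)
      have hpz : ∀ x : Fin n → PowerSeries k, p • x = 0 := by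
        intro x
        funext i
        rw [Pi.smul_apply, nsmul_eq_mul, ← map_natCast (C (R := k)) p, CharP.cast_eq_zero k p,
          map_zero, zero_mul]
        rfl
      rw [hc, mul_smul, hpz]
  rw [Finset.sum_eq_zero h0, zero_add, Nat.choose_self, one_smul, Nat.sub_self,
    Function.iterate_zero]
  have hA : matConnOp k A 1 = A := by
    funext i j
    simp only [matConnOp, matD, Matrix.add_apply, mul_one, Matrix.one_apply]
    by_cases h : i = j <;> simp [h, pd]
  have hiter : (matConnOp k A)^[p - 1] A = (matConnOp k A)^[p] 1 := by
    conv_rhs => rw [← Nat.succ_pred_eq_of_pos hp.pos]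
    rw [Function.iterate_succ_apply, hA]
    rfl
  rw [hiter]
  rfl
end

section
/- Let k be a field of characteristic p > 0. For every g ∈ k[[z]] with g′ = 0, there exists f ∈ k[[z]] with f^p + f^{(p−1)} = g, where f^{(p−1)} denotes the (p−1)-st iterated formal derivative of f. (This is the local, rank-one surjectivity of the p-Hitchin/p-curvature map h_p, the last nontrivial exactness assertion of the four-term exact sequence in Proposition A.4.) -/
open PowerSeries

section Aux

variable {k : Type*} [Field k]

lemma ACoef_lt {p n : ℕ} (hd : p ∣ (n + 1)) (hp2 : 2 ≤ p) : (n + 1) / p - 1 < n := by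
  have h1 : p * ((n + 1) / p) = n + 1 := Nat.mul_div_cancel' hd
  have hq0 : (n + 1) / p ≠ 0 := by
    intro h0
    rw [h0, Nat.mul_zero] at h1
    omega
  have h2 : 2 * ((n + 1) / p) ≤ p * ((n + 1) / p) := Nat.mul_le_mul_right _ hp2
  rw [h1] at h2
  omega

/-- Recursively defined coefficients of the solution `f`. -/
noncomputable def ACoef (p : ℕ) (b : ℕ → k) : ℕ → k
  | n =>
    if h : p ∣ (n + 1) ∧ 2 ≤ p then
      ACoef p b ((n + 1) / p - 1) ^ p - b ((n + 1) / p - 1)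
    else 0
  decreasing_by
    exact ACoef_lt h.1 h.2

lemma ACoef_eq (p : ℕ) (hp2 : 2 ≤ p) (b : ℕ → k) (n : ℕ) :
    ACoef p b n = if p ∣ (n + 1) then
      ACoef p b ((n + 1) / p - 1) ^ p - b ((n + 1) / p - 1) else 0 := by
  rw [ACoef.eq_def]
  by_cases h : p ∣ (n + 1)
  · rw [dif_pos ⟨h, hp2⟩, if_pos h]
  · rw [dif_neg (by tauto), if_neg h]

variable (p : ℕ) [Fact p.Prime] [CharP k p]

lemma coeff_pd_iterate (f : PowerSeries k) (j n : ℕ) :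
    coeff n ((pd k)^[j] f) = coeff (n + j) f * ((n + j).descFactorial j : k) := by
  induction j generalizing n with
  | zero => simp
  | succ j ih =>
    rw [Function.iterate_succ_apply']
    show coeff n (PowerSeries.derivative k ((pd k)^[j] f)) = _
    rw [PowerSeries.coeff_derivative, ih]
    have hnat : (n + 1 + j).descFactorial (j + 1)
        = (n + 1) * ((n + 1 + j).descFactorial j) := by
      rw [Nat.descFactorial_succ]
      congr 1
      omega
    have h2 : n + (j + 1) = n + 1 + j := by ring
    rw [h2, hnat]
    push_cast
    ring

lemma charP_powerSeries : CharP (PowerSeries k) p :=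
  charP_of_injective_ringHom (PowerSeries.C_injective (R := k)) p

lemma coeff_pow_char_ps (f : PowerSeries k) (n : ℕ) :
    coeff n (f ^ p) = if p ∣ n then coeff (n / p) f ^ p else 0 := by
  haveI := charP_powerSeries (k := k) p
  have hp : p.Prime := Fact.out
  set N := n + 1 with hN
  set T : Polynomial k := trunc N f with hT
  -- decompose f
  have hdvd : (X : PowerSeries k) ^ N ∣ (f - (T : PowerSeries k)) := by
    rw [PowerSeries.X_pow_dvd_iff]
    intro m hm
    rw [map_sub, Polynomial.coeff_coe, coeff_trunc, if_pos hm, sub_self]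
  obtain ⟨R, hR⟩ := hdvd
  have hf : f = (T : PowerSeries k) + X ^ N * R := by
    rw [← hR]; ring
  have hpow : f ^ p = ((T : PowerSeries k)) ^ p + (X ^ N * R) ^ p := by
    rw [hf, add_pow_char]
  have hzero : coeff n ((X ^ N * R : PowerSeries k) ^ p) = 0 := by
    have hdvd2 : (X : PowerSeries k) ^ (N * p) ∣ (X ^ N * R) ^ p := by
      rw [mul_pow, ← pow_mul]
      exact Dvd.intro _ rfl
    rw [PowerSeries.X_pow_dvd_iff] at hdvd2
    exact hdvd2 n (by nlinarith [hp.two_le])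
  have hTp : ((T : PowerSeries k)) ^ p = ((T ^ p : Polynomial k) : PowerSeries k) := by
    push_cast; ring
  have hcoeffT : coeff n (((T ^ p : Polynomial k) : PowerSeries k))
      = if p ∣ n then coeff (n / p) f ^ p else 0 := by
    rw [Polynomial.coeff_coe, ← Polynomial.map_frobenius_expand (p := p) (f := T),
      Polynomial.coeff_map, Polynomial.coeff_expand hp.pos]
    by_cases h : p ∣ n
    · rw [if_pos h, if_pos h, frobenius_def]
      congr 1
      rw [hT, coeff_trunc, if_pos (by have := Nat.div_le_self n p; omega)]
    · rw [if_neg h, if_neg h, map_zero]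
  rw [hpow, map_add, hzero, add_zero, hTp, hcoeffT]

lemma descFactorial_char (n : ℕ) :
    (((n + (p - 1)).descFactorial (p - 1) : ℕ) : k) = if p ∣ n then -1 else 0 := by
  have hp : p.Prime := Fact.out
  have hp2 : 2 ≤ p := hp.two_le
  rw [Nat.descFactorial_eq_prod_range, Nat.cast_prod]
  by_cases h : p ∣ n
  · rw [if_pos h]
    have hfac : ∀ i ∈ Finset.range (p - 1),
        ((n + (p - 1) - i : ℕ) : k) = ((p - 1 - i : ℕ) : k) := by
      intro i hi
      rw [Finset.mem_range] at hi
      have h1 : n + (p - 1) - i = n + (p - 1 - i) := by omega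
      rw [h1, Nat.cast_add, CharP.cast_eq_zero_iff k p n |>.mpr h, zero_add]
    rw [Finset.prod_congr rfl hfac, ← Nat.cast_prod,
      ← Nat.descFactorial_eq_prod_range, Nat.descFactorial_self]
    -- Wilson's lemma, transferred to k
    have hw : ((Nat.factorial (p - 1) : ℕ) : ZMod p) = ((p - 1 : ℕ) : ZMod p) := by
      rw [ZMod.wilsons_lemma, Nat.cast_sub hp.one_le, ZMod.natCast_self, Nat.cast_one]
      ring
    have hmod : Nat.factorial (p - 1) ≡ (p - 1) [MOD p] :=
      (ZMod.natCast_eq_natCast_iff _ _ _).mp hw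
    have : ((Nat.factorial (p - 1) : ℕ) : k) = ((p - 1 : ℕ) : k) :=
      CharP.natCast_eq_natCast' k p hmod
    rw [this, Nat.cast_sub hp.one_le, CharP.cast_eq_zero, Nat.cast_one]
    ring
  · rw [if_neg h]
    have hmod : n % p ≠ 0 := fun hc => h (Nat.dvd_of_mod_eq_zero hc)
    have hmodlt : n % p < p := Nat.mod_lt _ hp.pos
    refine Finset.prod_eq_zero (i := n % p - 1) (Finset.mem_range.mpr (by omega)) ?_
    rw [CharP.cast_eq_zero_iff k p]
    have hdm := Nat.div_add_mod n p
    have h1 : n + (p - 1) - (n % p - 1) = p * (n / p) + p := by omega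
    rw [h1]
    exact ⟨n / p + 1, by ring⟩

end Aux

/-- **Surjectivity of the local rank-one `p`-curvature map.** For every `g ∈ k⟦z⟧` with
`g′ = 0` there exists `f ∈ k⟦z⟧` with `f^p + f^{(p−1)} = g`. -/
theorem pCurvature_map_surjective (k : Type*) [Field k] (p : ℕ) [Fact p.Prime] [CharP k p] :
    ∀ g : PowerSeries k, pd k g = 0 →
      ∃ f : PowerSeries k, f ^ p + (pd k)^[p - 1] f = g := by
  intro g hg
  have hp : p.Prime := Fact.out
  have hp2 : 2 ≤ p := hp.two_le
  -- coefficients of g vanish away from multiples of p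
  have hgcoeff : ∀ n : ℕ, ¬ p ∣ n → coeff n g = 0 := by
    intro n hn
    have hn0 : n ≠ 0 := by rintro rfl; exact hn (dvd_zero p)
    obtain ⟨m, rfl⟩ := Nat.exists_eq_succ_of_ne_zero hn0
    have h1 : coeff m (pd k g) = 0 := by rw [hg]; simp
    have h2 : coeff (m + 1) g * ((m : k) + 1) = 0 := by
      rw [← PowerSeries.coeff_derivative]; exact h1
    have h3 : ((m + 1 : ℕ) : k) ≠ 0 := by
      rw [Ne, CharP.cast_eq_zero_iff k p]
      exact hn
    push_cast at h3
    exact (mul_eq_zero.mp h2).resolve_right h3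
  set b : ℕ → k := fun m => coeff (p * m) g with hb
  set a : ℕ → k := ACoef p b with ha
  -- the key recursion instance
  have hrec : ∀ m : ℕ, a (p * m + (p - 1)) = a m ^ p - b m := by
    intro m
    have h1 : p * m + (p - 1) + 1 = p * (m + 1) := by
      have : p * (m + 1) = p * m + p := by ring
      omega
    rw [ha, ACoef_eq p hp2, h1, if_pos ⟨m + 1, rfl⟩,
      Nat.mul_div_cancel_left _ hp.pos, Nat.add_sub_cancel]
  refine ⟨PowerSeries.mk a, ?_⟩
  ext n
  rw [map_add, coeff_pow_char_ps p, coeff_pd_iterate, PowerSeries.coeff_mk,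
    descFactorial_char p]
  by_cases h : p ∣ n
  · obtain ⟨m, rfl⟩ := h
    rw [if_pos ⟨m, rfl⟩, if_pos ⟨m, rfl⟩, Nat.mul_div_cancel_left _ hp.pos,
      PowerSeries.coeff_mk, hrec]
    ring
  · rw [if_neg h, if_neg h, mul_zero, add_zero, hgcoeff n h]
end

section
/- Let k be a field of characteristic p > 0, n ≥ 1, A an n×n matrix over k[[z]], and Ψ an n×n matrix over k[[z]] with D_A^p(v) = Ψ·v for all v ∈ k[[z]]^n. Then for every f ∈ k[[z]], the operator D_{A + f·1} (the connection twisted by the scalar one-form f dz) satisfies D_{A + f·1}^p(v) = (Ψ + (f^p + f^{(p−1)})·1)·v for all v ∈ k[[z]]^n, where 1 is the identity matrix and f^{(p−1)} is the (p−1)-st iterated formal derivative of f. (This is the local additivity of p-curvature under twisting by a rank-one connection, underlying the paper's Lemma 3.8 ('J to G') and the additivity h_p(E₁ ⊗ E₂) = h_p(E₁) + h_p(E₂) in the commutative case.) -/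
open PowerSeries

open Finset

section Key
variable {p : ℕ} [hp : Fact p.Prime]
variable {E : Type*} [Ring E]

theorem key_pow_char (k : Type*) [Field k] [CharP k p] (x y : E) [Algebra k E] (d : ℕ → E) (hd0 : d 0 = y)
    (hxd : ∀ j, x * d j = d j * x + d (j + 1))
    (hyd : ∀ j, y * d j = d j * y) :
    (x + y) ^ p = x ^ p + y ^ p + d (p - 1) := by
  have hp2 : 2 ≤ p := hp.out.two_le
  set 𝕏 : Polynomial E := Polynomial.C x + Polynomial.C y * Polynomial.X with h𝕏
  -- commutation in the polynomial ring
  have hXd : ∀ j, 𝕏 * Polynomial.C (d j) = Polynomial.C (d j) * 𝕏 + Polynomial.C (d (j + 1)) := by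
    intro j
    have h1 : 𝕏 * Polynomial.C (d j) = Polynomial.C (x * d j) + Polynomial.C (y * d j) * Polynomial.X := by
      rw [h𝕏, add_mul, ← Polynomial.C_mul, mul_assoc, Polynomial.X_mul_C, ← mul_assoc, ← Polynomial.C_mul]
    have h2 : Polynomial.C (d j) * 𝕏 + Polynomial.C (d (j + 1)) = Polynomial.C (d j * x) + Polynomial.C (d j * y) * Polynomial.X + Polynomial.C (d (j + 1)) := by
      rw [h𝕏, mul_add, ← Polynomial.C_mul, ← mul_assoc, ← Polynomial.C_mul]
    rw [h1, h2, hxd j, hyd j, Polynomial.C_add]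
    abel
  -- Polynomial.derivative of powers
  have hder : ∀ m : ℕ, Polynomial.derivative (𝕏 ^ m) =
      ∑ i ∈ range m, 𝕏 ^ i * Polynomial.C y * 𝕏 ^ (m - 1 - i) := by
    intro m
    induction m with
    | zero => simp
    | succ m ih =>
      have hd𝕏 : Polynomial.derivative 𝕏 = Polynomial.C y := by
        rw [h𝕏, Polynomial.derivative_add, Polynomial.derivative_C, Polynomial.derivative_C_mul_X, zero_add]
      rw [pow_succ', Polynomial.derivative_mul, hd𝕏, ih, mul_sum, Finset.sum_range_succ', add_comm]
      congr 1
      · apply Finset.sum_congr rfl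
        intro i hi
        have h : m + 1 - 1 - (i + 1) = m - 1 - i := by omega
        rw [h, pow_succ']
        simp only [mul_assoc]
      · simp
  -- the sum formula
  have hsum : ∀ m : ℕ, ∑ i ∈ range (m + 1), 𝕏 ^ i * Polynomial.C y * 𝕏 ^ (m - i) =
      ∑ j ∈ range (m + 1), ((m + 1).choose (j + 1)) • (Polynomial.C (d j) * 𝕏 ^ (m - j)) := by
    intro m
    induction m with
    | zero => simp [hd0]
    | succ m ih =>
      have split : ∑ i ∈ range (m + 2), 𝕏 ^ i * Polynomial.C y * 𝕏 ^ (m + 1 - i)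
          = Polynomial.C y * 𝕏 ^ (m + 1) + 𝕏 * ∑ i ∈ range (m + 1), 𝕏 ^ i * Polynomial.C y * 𝕏 ^ (m - i) := by
        rw [mul_sum, Finset.sum_range_succ' (fun i => 𝕏 ^ i * Polynomial.C y * 𝕏 ^ (m + 1 - i)), add_comm]
        congr 1
        · simp
        · apply Finset.sum_congr rfl
          intro i hi
          have h : m + 1 - (i + 1) = m - i := by omega
          rw [h, pow_succ']
          simp only [mul_assoc]
      rw [split, ih, mul_sum]
      have step : ∀ j ∈ range (m + 1),
          𝕏 * ((m + 1).choose (j + 1) • (Polynomial.C (d j) * 𝕏 ^ (m - j)))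
          = (m + 1).choose (j + 1) • (Polynomial.C (d j) * 𝕏 ^ (m + 1 - j))
            + (m + 1).choose (j + 1) • (Polynomial.C (d (j + 1)) * 𝕏 ^ (m - j)) := by
        intro j hj
        have hjm : j ≤ m := by simpa [Nat.lt_succ_iff] using hj
        have hexp : m + 1 - j = (m - j) + 1 := by omega
        rw [mul_smul_comm, ← mul_assoc, hXd j, add_mul, smul_add, hexp, pow_succ',
          mul_assoc]
      rw [Finset.sum_congr rfl step, Finset.sum_add_distrib]
      have reindex : Polynomial.C y * 𝕏 ^ (m + 1)
            + ∑ j ∈ range (m + 1), (m + 1).choose (j + 1) • (Polynomial.C (d (j + 1)) * 𝕏 ^ (m - j))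
          = ∑ j ∈ range (m + 2), (m + 1).choose j • (Polynomial.C (d j) * 𝕏 ^ (m + 1 - j)) := by
        rw [Finset.sum_range_succ' (fun j => (m + 1).choose j • (Polynomial.C (d j) * 𝕏 ^ (m + 1 - j))),
          add_comm]
        congr 1
        · apply Finset.sum_congr rfl
          intro j hj
          have h : m + 1 - (j + 1) = m - j := by omega
          rw [h]
        · simp [hd0]
      have ext1 : ∑ j ∈ range (m + 2), (m + 1).choose (j + 1) • (Polynomial.C (d j) * 𝕏 ^ (m + 1 - j))
          = ∑ j ∈ range (m + 1), (m + 1).choose (j + 1) • (Polynomial.C (d j) * 𝕏 ^ (m + 1 - j)) := by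
        rw [Finset.sum_range_succ]
        have h : (m + 1).choose (m + 2) = 0 := Nat.choose_eq_zero_of_lt (by omega)
        simp [h]
      rw [add_left_comm, reindex, ← ext1, ← Finset.sum_add_distrib]
      apply Finset.sum_congr rfl
      intro j hj
      rw [Nat.choose_succ_succ (m + 1) j, add_nsmul, add_comm]
  -- the Polynomial.derivative of 𝕏^p collapses to a single constant term
  have hfinal : Polynomial.derivative (𝕏 ^ p) = Polynomial.C (d (p - 1)) := by
    have hp1 : p - 1 + 1 = p := by omega
    have h1 := hder p
    have h2 := hsum (p - 1)
    rw [hp1] at h2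
    rw [h1]
    have h3 : ∀ i ∈ range p, 𝕏 ^ i * Polynomial.C y * 𝕏 ^ (p - 1 - i) = 𝕏 ^ i * Polynomial.C y * 𝕏 ^ (p - 1 - i) :=
      fun _ _ => rfl
    rw [h2]
    rw [Finset.sum_eq_single (p - 1)]
    · rw [Nat.sub_self, pow_zero, mul_one, hp1, Nat.choose_self, one_smul]
    · intro j hj hne
      have hjp : j + 1 < p := by
        simp only [mem_range] at hj; omega
      have hdvd : p ∣ p.choose (j + 1) := hp.out.dvd_choose_self (by omega) hjp
      have hzero : ((p.choose (j + 1) : k)) = 0 := (CharP.cast_eq_zero_iff k p _).mpr hdvd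
      rw [← Nat.cast_smul_eq_nsmul k, hzero, zero_smul]
    · intro h
      exact absurd (by simp [mem_range]; omega) h
  -- coefficients of T := 𝕏 ^ p
  have hdeg : ∀ m : ℕ, (𝕏 ^ m).natDegree ≤ m := by
    intro m
    calc (𝕏 ^ m).natDegree ≤ m * 𝕏.natDegree := Polynomial.natDegree_pow_le
    _ ≤ m * 1 := by
        apply Nat.mul_le_mul_left
        rw [h𝕏]
        apply le_trans (Polynomial.natDegree_add_le _ _)
        simp only [Polynomial.natDegree_C, max_le_iff]
        constructor
        · omega
        · apply le_trans (Polynomial.natDegree_mul_le)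
          simpa using Polynomial.natDegree_X_le
    _ = m := mul_one m
  have hcoeff0 : ∀ m : ℕ, (𝕏 ^ m).coeff 0 = x ^ m := by
    intro m
    induction m with
    | zero => simp
    | succ m ih =>
      rw [pow_succ, Polynomial.mul_coeff_zero, ih]
      have h : 𝕏.coeff 0 = x := by rw [h𝕏]; simp
      rw [h, ← pow_succ]
  have hcoefftop : ∀ m : ℕ, (𝕏 ^ m).coeff m = y ^ m := by
    intro m
    induction m with
    | zero => simp
    | succ m ih =>
      rw [pow_succ', Polynomial.coeff_mul, Finset.sum_eq_single (1, m)]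
      · have h : 𝕏.coeff 1 = y := by rw [h𝕏]; simp
        show 𝕏.coeff 1 * (𝕏 ^ m).coeff m = y ^ (m + 1)
        rw [h, ih, ← pow_succ']
      · rintro ⟨i, j⟩ hmem hne
        simp only [Finset.HasAntidiagonal.mem_antidiagonal] at hmem
        rcases Nat.lt_or_ge i 2 with hi | hi
        · interval_cases i
          · have : j = m + 1 := by omega
            subst this
            rw [Polynomial.coeff_eq_zero_of_natDegree_lt (lt_of_le_of_lt (hdeg m) (by omega)), mul_zero]
          · exact absurd (by omega : j = m) (fun h => hne (by simp [h]))
        · have h𝕏i : 𝕏.coeff i = 0 := by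
            rw [h𝕏, Polynomial.coeff_add, Polynomial.coeff_C, if_neg (by omega), Polynomial.coeff_C_mul,
              Polynomial.coeff_X, if_neg (by omega), mul_zero, add_zero]
          rw [h𝕏i, zero_mul]
      · intro h
        exact absurd (by simp [Finset.HasAntidiagonal.mem_antidiagonal]; omega) h
  -- middle coefficients vanish
  have hcoeff1 : (𝕏 ^ p).coeff 1 = d (p - 1) := by
    have := Polynomial.coeff_derivative (𝕏 ^ p) 0
    rw [hfinal, Polynomial.coeff_C, if_pos rfl] at this
    simpa using this.symm
  have hcoeffmid : ∀ i : ℕ, 2 ≤ i → i ≤ p - 1 → (𝕏 ^ p).coeff i = 0 := by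
    intro i h2i hip
    have hi1 : i - 1 + 1 = i := by omega
    have := Polynomial.coeff_derivative (𝕏 ^ p) (i - 1)
    rw [hfinal, Polynomial.coeff_C, if_neg (by omega), ← Nat.cast_add_one, hi1] at this
    -- this : 0 = (𝕏^p).coeff i * (i : E)  (or reversed)
    have hcast : ((i : ℕ) : E) = algebraMap k E (i : k) := by
      rw [map_natCast]
    have hknz : ((i : k)) ≠ 0 := by
      rw [Ne, CharP.cast_eq_zero_iff k p i]
      intro hdvd
      have := Nat.le_of_dvd (by omega) hdvd
      omega
    have h0 : (𝕏 ^ p).coeff i * algebraMap k E (i : k) = 0 := by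
      rw [← hcast]
      exact this.symm
    have h2 : (𝕏 ^ p).coeff i
        = ((𝕏 ^ p).coeff i * algebraMap k E (i : k)) * algebraMap k E ((i : k)⁻¹) := by
      rw [mul_assoc, ← map_mul, mul_inv_cancel₀ hknz, map_one, mul_one]
    rw [h2, h0, zero_mul]
  -- evaluate at 1 via the noncommutative evaluation ring hom
  let ψ : Polynomial E →+* E := Polynomial.eval₂RingHom' (RingHom.id E) 1 (fun a => Commute.one_right _)
  have hψ𝕏 : ψ 𝕏 = x + y := by
    rw [h𝕏, map_add, map_mul]
    simp only [ψ, Polynomial.eval₂RingHom'_apply, Polynomial.eval₂_C, Polynomial.eval₂_X, RingHom.id_apply, mul_one]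
  have hψT : ψ (𝕏 ^ p) = (x + y) ^ p := by rw [map_pow, hψ𝕏]
  have hev : ψ (𝕏 ^ p) = ∑ i ∈ range (p + 1), (𝕏 ^ p).coeff i := by
    have : ψ (𝕏 ^ p) = Polynomial.eval₂ (RingHom.id E) 1 (𝕏 ^ p) := rfl
    rw [this, Polynomial.eval₂_eq_sum_range' (RingHom.id E) (Nat.lt_succ_of_le (hdeg p)) 1]
    apply Finset.sum_congr rfl
    intro i _
    simp
  have hsumcoeff : ∑ i ∈ range (p + 1), (𝕏 ^ p).coeff i = x ^ p + d (p - 1) + y ^ p := by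
    have hterm : ∀ i ∈ range (p + 1), (𝕏 ^ p).coeff i =
        (if i = 0 then x ^ p else 0) + (if i = 1 then d (p - 1) else 0)
          + (if i = p then y ^ p else 0) := by
      intro i hi
      simp only [mem_range] at hi
      by_cases h0 : i = 0
      · subst h0
        rw [hcoeff0 p, if_pos rfl, if_neg (by omega : (0 : ℕ) ≠ 1),
          if_neg (by omega : (0 : ℕ) ≠ p), add_zero, add_zero]
      by_cases h1 : i = 1
      · subst h1
        rw [hcoeff1, if_neg (by omega : (1 : ℕ) ≠ 0), if_pos rfl,
          if_neg (by omega : (1 : ℕ) ≠ p), zero_add, add_zero]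
      by_cases hpp : i = p
      · rw [hpp, hcoefftop p, if_neg (by omega : p ≠ 0), if_neg (by omega : p ≠ 1),
          if_pos rfl, zero_add, zero_add]
      · rw [hcoeffmid i (by omega) (by omega), if_neg h0, if_neg h1, if_neg hpp,
          add_zero, add_zero]
    rw [Finset.sum_congr rfl hterm, Finset.sum_add_distrib, Finset.sum_add_distrib,
      Finset.sum_ite_eq' (range (p + 1)) 0 (fun _ => x ^ p),
      Finset.sum_ite_eq' (range (p + 1)) 1 (fun _ => d (p - 1)),
      Finset.sum_ite_eq' (range (p + 1)) p (fun _ => y ^ p)]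
    simp only [mem_range]
    rw [if_pos (by omega), if_pos (by omega), if_pos (by omega)]
  rw [← hψT, hev, hsumcoeff]
  abel

end Key



section App

variable (k : Type*) [Field k] (n : ℕ)

/-- Scalar multiplication by a power series, as a `k`-linear endomorphism of `k⟦z⟧ⁿ`. -/
noncomputable def Mop (g : PowerSeries k) : Module.End k (Fin n → PowerSeries k) where
  toFun v := g • v
  map_add' u v := funext fun i => smul_add g (u i) (v i)
  map_smul' c v := funext fun i => mul_smul_comm c g (v i)

lemma Mop_apply (g : PowerSeries k) (v : Fin n → PowerSeries k) (i : Fin n) :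
    Mop k n g v i = g * v i := rfl

lemma Mop_mul (g h : PowerSeries k) : Mop k n (g * h) = Mop k n g * Mop k n h := by
  apply LinearMap.ext
  intro v
  funext i
  simp [Mop_apply, Module.End.mul_apply, mul_assoc]

lemma Mop_pow (g : PowerSeries k) (m : ℕ) : Mop k n (g ^ m) = (Mop k n g) ^ m := by
  induction m with
  | zero =>
    apply LinearMap.ext; intro v; funext i
    simp [Mop_apply]
  | succ m ih => rw [pow_succ, pow_succ, ← ih, ← Mop_mul]

/-- `D_A` as a `k`-linear endomorphism. -/
noncomputable def DAop (A : Matrix (Fin n) (Fin n) (PowerSeries k)) :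
    Module.End k (Fin n → PowerSeries k) where
  toFun := connOp k A
  map_add' u v := by
    funext i
    simp only [connOp, pd, Pi.add_apply, Matrix.mulVec_add, map_add]
    abel
  map_smul' c v := by
    funext i
    simp only [connOp, pd, Pi.add_apply, Pi.smul_apply, RingHom.id_apply,
      Matrix.mulVec_smul, Derivation.map_smul, smul_add]

lemma DAop_coe (A : Matrix (Fin n) (Fin n) (PowerSeries k)) : ⇑(DAop k n A) = connOp k A := rfl

/-- Commutation rule `D_A ∘ g = g ∘ D_A + g'`. -/
lemma DAop_Mop_comm (A : Matrix (Fin n) (Fin n) (PowerSeries k)) (g : PowerSeries k) :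
    DAop k n A * Mop k n g = Mop k n g * DAop k n A + Mop k n (pd k g) := by
  apply LinearMap.ext
  intro v
  funext i
  show pd k ((g • v) i) + (A.mulVec (g • v)) i
    = g * (pd k (v i) + (A.mulVec v) i) + pd k g * v i
  have h1 : pd k ((g • v) i) = g * pd k (v i) + pd k g * v i := by
    show pd k (g * v i) = _
    simp only [pd, Derivation.leibniz, smul_eq_mul]
    ring
  have h2 : A.mulVec (g • v) i = g * (A.mulVec v i) := by
    have := Matrix.mulVec_smul A g v
    rw [this]
    rfl
  rw [h1, h2]
  ring

end App

/-- **Additivity of `p`-curvature under a rank-one twist.** If `D_A^p(v) = Ψ·v` for all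
`v`, then for any `f ∈ k⟦z⟧` the twisted connection `d/dz + (A + f·1)` has `p`-curvature
matrix `Ψ + (f^p + f^{(p−1)})·1`. -/
theorem pCurvature_twist (k : Type*) [Field k] (p : ℕ) [Fact p.Prime] [CharP k p]
    (n : ℕ) (hn : 1 ≤ n) (A Ψ : Matrix (Fin n) (Fin n) (PowerSeries k))
    (hΨ : ∀ v : Fin n → PowerSeries k, (connOp k A)^[p] v = Ψ.mulVec v)
    (f : PowerSeries k) :
    ∀ v : Fin n → PowerSeries k,
      (connOp k (A + f • (1 : Matrix (Fin n) (Fin n) (PowerSeries k))))^[p] v =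
        (Ψ + (f ^ p + (pd k)^[p - 1] f) • (1 : Matrix (Fin n) (Fin n) (PowerSeries k))).mulVec v := by
  intro v
  have hd0 : (fun j => Mop k n ((pd k)^[j] f)) 0 = Mop k n f := by
    simp only [Function.iterate_zero_apply]
  have hxd : ∀ j, DAop k n A * Mop k n ((pd k)^[j] f)
      = Mop k n ((pd k)^[j] f) * DAop k n A + Mop k n ((pd k)^[j + 1] f) := by
    intro j
    rw [Function.iterate_succ_apply']
    exact DAop_Mop_comm k n A _
  have hyd : ∀ j, Mop k n f * Mop k n ((pd k)^[j] f)
      = Mop k n ((pd k)^[j] f) * Mop k n f := by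
    intro j
    rw [← Mop_mul, ← Mop_mul, mul_comm]
  have hkey := key_pow_char (p := p) k (DAop k n A) (Mop k n f)
    (fun j => Mop k n ((pd k)^[j] f)) hd0 hxd hyd
  have hconn : connOp k (A + f • (1 : Matrix (Fin n) (Fin n) (PowerSeries k)))
      = ⇑(DAop k n A + Mop k n f) := by
    funext w
    funext i
    show pd k (w i) + ((A + f • 1).mulVec w) i = (connOp k A w) i + (f • w) i
    rw [Matrix.add_mulVec, Matrix.smul_mulVec, Matrix.one_mulVec]
    show pd k (w i) + ((A.mulVec w) i + (f • w) i)
      = (pd k (w i) + (A.mulVec w) i) + (f • w) i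
    ring
  have hDA : ((DAop k n A) ^ p) v = Ψ.mulVec v := by
    rw [Module.End.pow_apply]
    exact hΨ v
  have hY : ((Mop k n f) ^ p) v = f ^ p • v := by
    rw [← Mop_pow]
    rfl
  rw [hconn, ← Module.End.pow_apply, hkey, LinearMap.add_apply, LinearMap.add_apply, hDA, hY]
  rw [Matrix.add_mulVec, Matrix.smul_mulVec, Matrix.one_mulVec, add_smul, ← add_assoc]
  rfl
end
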